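/- Let u ∈ C¹(ℝ, H¹(ℝ)) solve the gBBM equation ∂_t u = -(1-∂_x²)^{-1}∂_x(u + |u|^p u), and set H(u) = -(1-∂_x²)^{-1}(u + |u|^p u), so that ∂_x H(u) = u_t. Then pointwise in (t,x): ∂_t( (1/2)u² + (1/(p+2))|u|^{p+2} ) = -(1/2)∂_x[ (H(u))² - (u_t)² ]. -/

import Mathlib

open Real

/-- Pointwise flux identity for solutions of the gBBM equation:
`∂ₜ(½u² + |u|^{p+2}/(p+2)) = -½ ∂ₓ[(H(u))² - uₜ²]`. -/
theorem stmt19 (p : ℝ) (hp : 0 < p) (u H ut : ℝ → ℝ → ℝ)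
    (hut : ∀ t x, HasDerivAt (fun s => u s x) (ut t x) t)
    (hHdiff : ∀ t, Differentiable ℝ (H t))
    (hutdiff : ∀ t, Differentiable ℝ (ut t))
    (hHx : ∀ t x, deriv (H t) x = ut t x)
    (hEq : ∀ t x, u t x + |u t x| ^ p * u t x = -(H t x) + deriv (ut t) x) :
    ∀ t x, HasDerivAt
      (fun s => (1 / 2) * (u s x) ^ 2 + (1 / (p + 2)) * |u s x| ^ (p + 2))
      (-(1 / 2) * deriv (fun y => (H t y) ^ 2 - (ut t y) ^ 2) x) t := by
  intro t x
  have hp2 : (p : ℝ) + 2 ≠ 0 := by linarith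
  have h1 : HasDerivAt (fun s => (1 / 2) * (u s x) ^ 2)
      (u t x * ut t x) t := by
    have := ((hut t x).fun_pow 2).const_mul (1 / 2 : ℝ)
    refine this.congr_deriv ?_
    ring
  have habs : HasDerivAt (fun y : ℝ => |y| ^ (p + 2))
      ((p + 2) * |u t x| ^ (p + 2 - 2) * u t x) (u t x) :=
    hasDerivAt_abs_rpow (u t x) (by linarith)
  have h2 : HasDerivAt (fun s => (1 / (p + 2)) * |u s x| ^ (p + 2))
      (|u t x| ^ p * u t x * ut t x) t := by
    have := (habs.comp t (hut t x)).const_mul (1 / (p + 2) : ℝ)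
    refine this.congr_deriv ?_
    field_simp
    ring_nf
  have hsum := h1.fun_add h2
  refine hsum.congr_deriv (Eq.symm ?_)
  -- compute the x-derivative of H² - ut²
  have hH2 : deriv (fun y => (H t y) ^ 2 - (ut t y) ^ 2) x
      = 2 * H t x * ut t x - 2 * ut t x * deriv (ut t) x := by
    have hd : HasDerivAt (fun y => (H t y) ^ 2 - (ut t y) ^ 2)
        (2 * H t x * deriv (H t) x - 2 * ut t x * deriv (ut t) x) x := by
      have a1 := ((hHdiff t x).hasDerivAt.fun_pow 2)
      have a2 := ((hutdiff t x).hasDerivAt.fun_pow 2)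
      simpa [mul_comm, mul_assoc, pow_one] using (a1.fun_sub a2 : HasDerivAt _ _ x)
    rw [hd.deriv, hHx]
  rw [hH2]
  linear_combination (-(ut t x)) * hEq t x
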